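/- For every natural number n, the probabilist's Hermite polynomial He_n, viewed as a real polynomial, has exactly n distinct real roots (it is a degree-n polynomial all of whose roots are real and simple). -/

import Mathlib

open Polynomial Filter Set Topology Real

noncomputable def hermiteR (n : ℕ) : ℝ[X] := (hermite n).map (algebraMap ℤ ℝ)

lemma aeval_eq_eval_hermiteR (n : ℕ) (x : ℝ) :
    Polynomial.aeval x (hermite n) = (hermiteR n).eval x := by
  rw [hermiteR, eval_map, aeval_def]

lemma hermiteR_monic (n : ℕ) : (hermiteR n).Monic := (hermite_monic n).map _

lemma hermiteR_ne_zero (n : ℕ) : hermiteR n ≠ 0 := (hermiteR_monic n).ne_zero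

lemma hermiteR_natDegree (n : ℕ) : (hermiteR n).natDegree = n := by
  rw [hermiteR, natDegree_map_eq_of_injective (algebraMap ℤ ℝ).injective_int, natDegree_hermite]

lemma hermiteR_succ (n : ℕ) :
    hermiteR (n + 1) = X * hermiteR n - derivative (hermiteR n) := by
  rw [hermiteR, hermite_succ, Polynomial.map_sub, Polynomial.map_mul, map_X, ← derivative_map,
    hermiteR]


lemma tendsto_poly_gauss_atTop (p : ℝ[X]) :
    Tendsto (fun x => p.eval x * Real.exp (-(x^2)/2)) atTop (𝓝 0) := by
  have h := p.tendsto_div_exp_atTop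
  have h' : Tendsto (fun x => |p.eval x / Real.exp x|) atTop (𝓝 0) := by
    simpa using h.abs
  apply squeeze_zero_norm' ?_ h'
  filter_upwards [eventually_ge_atTop (2:ℝ)] with x hx
  have hle : Real.exp (-(x^2)/2) ≤ Real.exp (-x) := by
    apply Real.exp_le_exp.2; nlinarith
  have heq : |p.eval x| / Real.exp x = |p.eval x| * Real.exp (-x) := by
    rw [Real.exp_neg, div_eq_mul_inv]
  rw [Real.norm_eq_abs, abs_mul, Real.abs_exp, abs_div, Real.abs_exp, heq]
  exact mul_le_mul_of_nonneg_left hle (abs_nonneg _)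

lemma tendsto_poly_gauss_atBot (p : ℝ[X]) :
    Tendsto (fun x => p.eval x * Real.exp (-(x^2)/2)) atBot (𝓝 0) := by
  have h := (tendsto_poly_gauss_atTop (p.comp (-X))).comp tendsto_neg_atBot_atTop
  simpa [Function.comp_def, eval_comp] using h

lemma exists_deriv_zero_Ioi_aux {f f' : ℝ → ℝ} (hf : ∀ x, HasDerivAt f (f' x) x)
    {a b : ℝ} (hab : a < b) (hfa : f a = 0) (hfb : 0 < f b)
    (hlim : Tendsto f atTop (𝓝 0)) : ∃ c, a < c ∧ f' c = 0 := by
  obtain ⟨M, hM⟩ : ∃ M, ∀ x ≥ M, f x < f b :=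
    eventually_atTop.1 (hlim.eventually (gt_mem_nhds hfb))
  have hcont : Continuous f := by
    rw [continuous_iff_continuousAt]; exact fun x => (hf x).continuousAt
  have hne : (Icc a (max M b)).Nonempty := ⟨a, le_refl a, hab.le.trans (le_max_right M b)⟩
  obtain ⟨c, hc_mem, hc⟩ := isCompact_Icc.exists_isMaxOn hne hcont.continuousOn
  have hbc : f b ≤ f c := hc ⟨hab.le, le_max_right M b⟩
  have hac : a < c := by
    rcases lt_or_eq_of_le hc_mem.1 with h | h
    · exact h
    · exfalso; rw [← h, hfa] at hbc; exact not_le.2 hfb hbc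
  have hmax : IsMaxOn f (Ici a) c := by
    intro x hx
    rcases le_or_gt x (max M b) with h | h
    · exact hc ⟨hx, h⟩
    · exact le_trans (hM x ((le_max_left M b).trans h.le)).le hbc
  exact ⟨c, hac, (hmax.isLocalMax (Ici_mem_nhds hac)).hasDerivAt_eq_zero (hf c)⟩

lemma exists_deriv_zero_Ioi {f f' : ℝ → ℝ} (hf : ∀ x, HasDerivAt f (f' x) x)
    {a b : ℝ} (hab : a < b) (hfa : f a = 0) (hfb : f b ≠ 0)
    (hlim : Tendsto f atTop (𝓝 0)) : ∃ c, a < c ∧ f' c = 0 := by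
  rcases hfb.lt_or_gt with h | h
  · obtain ⟨c, h1, h2⟩ := exists_deriv_zero_Ioi_aux (f := fun y => -f y) (f' := fun y => -f' y)
      (fun x => (hf x).neg) hab (by simp [hfa]) (by simpa using h) (by simpa using hlim.neg)
    exact ⟨c, h1, by simpa using h2⟩
  · exact exists_deriv_zero_Ioi_aux hf hab hfa h hlim

lemma exists_deriv_zero_Iio {f f' : ℝ → ℝ} (hf : ∀ x, HasDerivAt f (f' x) x)
    {a b : ℝ} (hab : b < a) (hfa : f a = 0) (hfb : f b ≠ 0)
    (hlim : Tendsto f atBot (𝓝 0)) : ∃ c, c < a ∧ f' c = 0 := by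
  have hf' : ∀ x, HasDerivAt (fun y => f (-y)) (-(f' (-x))) x := fun x => by
    exact ((hf (-x)).comp x (hasDerivAt_neg x)).congr_deriv (by ring)
  obtain ⟨c, h1, h2⟩ := exists_deriv_zero_Ioi (f := fun y => f (-y))
    (f' := fun y => -(f' (-y))) hf' (neg_lt_neg hab) (by simpa using hfa)
    (by simpa using hfb) (hlim.comp tendsto_neg_atTop_atBot)
  exact ⟨-c, by linarith, by simpa using h2⟩

lemma hasDerivAt_gauss (n : ℕ) (x : ℝ) :
    HasDerivAt (fun y => (hermiteR n).eval y * Real.exp (-(y^2)/2))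
      (-((hermiteR (n+1)).eval x * Real.exp (-(x^2)/2))) x := by
  have h1 : HasDerivAt (fun y : ℝ => (hermiteR n).eval y)
      ((derivative (hermiteR n)).eval x) x := (hermiteR n).hasDerivAt x
  have h2 : HasDerivAt (fun y : ℝ => -(y^2)/2) (-x) x := by
    have h := ((hasDerivAt_pow 2 x).neg).div_const 2
    norm_num at h
    refine h.congr_deriv ?_
    ring
  have h3 := h2.exp
  have h4 := h1.mul h3
  refine h4.congr_deriv ?_
  rw [hermiteR_succ]
  simp only [eval_sub, eval_mul, eval_X]
  ring

lemma card_roots_hermiteR_ge (n : ℕ) : n ≤ (hermiteR n).roots.toFinset.card := by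
  induction n with
  | zero => simp
  | succ n ih =>
    have memroots : ∀ m : ℕ, ∀ z : ℝ, z ∈ (hermiteR m).roots.toFinset ↔
        (hermiteR m).eval z = 0 := by
      intro m z
      rw [Multiset.mem_toFinset, mem_roots (hermiteR_ne_zero m)]
      rfl
    set g := fun y => (hermiteR n).eval y * Real.exp (-(y^2)/2) with hgdef
    have hg : ∀ x, HasDerivAt g (-((hermiteR (n+1)).eval x * Real.exp (-(x^2)/2))) x :=
      hasDerivAt_gauss n
    have hgroot : ∀ x, (hermiteR n).eval x = 0 → g x = 0 := by
      intro x hx; simp [hgdef, hx]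
    have keyroot : ∀ c : ℝ, -((hermiteR (n+1)).eval c * Real.exp (-(c^2)/2)) = 0 →
        (hermiteR (n+1)).eval c = 0 := by
      intro c hc
      have := (Real.exp_pos (-(c^2)/2)).ne'
      rcases mul_eq_zero.1 (neg_eq_zero.1 hc) with h | h
      · exact h
      · exact absurd h this
    rcases Nat.eq_zero_or_pos n with rfl | hn
    · -- base: hermiteR 1 = X has root 0
      have h0 : (0 : ℝ) ∈ (hermiteR 1).roots.toFinset := by
        rw [memroots]
        rw [hermiteR, hermite_one, map_X, eval_X]
      simpa using Finset.card_pos.2 ⟨0, h0⟩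
    · set s := (hermiteR n).roots.toFinset with hsdef
      have hs : s.Nonempty := Finset.card_pos.1 (lt_of_lt_of_le hn ih)
      set a := s.min' hs with hadef
      set b := s.max' hs with hbdef
      have hab : a ≤ b := s.min'_le b (s.max'_mem hs)
      set T := (hermiteR (n+1)).roots.toFinset with hTdef
      set T' := T.filter (fun z => a < z ∧ z < b) with hT'def
      -- interleaving
      have h1 : s.card ≤ (T' \ s).card + 1 := by
        apply Finset.card_le_diff_of_interleaved
        intro x hx y hy hxy _
        have hgx : g x = 0 := hgroot x ((memroots n x).1 hx)
        have hgy : g y = 0 := hgroot y ((memroots n y).1 hy)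
        have hcont : ContinuousOn g (Icc x y) :=
          (Continuous.continuousOn (by
            rw [continuous_iff_continuousAt]; exact fun t => (hg t).continuousAt))
        obtain ⟨z, hz, hz0⟩ := exists_hasDerivAt_eq_zero hxy hcont (hgx.trans hgy.symm)
          (fun t _ => hg t)
        refine ⟨z, ?_, hz.1, hz.2⟩
        rw [hT'def, Finset.mem_filter]
        refine ⟨(memroots (n+1) z).2 (keyroot z hz0),
          lt_of_le_of_lt (s.min'_le x hx) hz.1, lt_of_lt_of_le hz.2 (s.le_max' y hy)⟩
      -- right tail
      have hb0 : g b = 0 := hgroot b ((memroots n b).1 (s.max'_mem hs))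
      have hb1 : g (b + 1) ≠ 0 := by
        intro h
        have : (hermiteR n).eval (b+1) = 0 := by
          rcases mul_eq_zero.1 h with h' | h'
          · exact h'
          · exact absurd h' (Real.exp_pos _).ne'
        have := s.le_max' (b+1) ((memroots n (b+1)).2 this)
        linarith
      obtain ⟨zr, hzr, hzr0⟩ := exists_deriv_zero_Ioi hg (by linarith : b < b + 1) hb0 hb1
        (tendsto_poly_gauss_atTop _)
      have hzrT : zr ∈ T := (memroots (n+1) zr).2 (keyroot zr hzr0)
      -- left tail
      have ha0 : g a = 0 := hgroot a ((memroots n a).1 (s.min'_mem hs))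
      have ha1 : g (a - 1) ≠ 0 := by
        intro h
        have : (hermiteR n).eval (a-1) = 0 := by
          rcases mul_eq_zero.1 h with h' | h'
          · exact h'
          · exact absurd h' (Real.exp_pos _).ne'
        have := s.min'_le (a-1) ((memroots n (a-1)).2 this)
        linarith
      obtain ⟨zl, hzl, hzl0⟩ := exists_deriv_zero_Iio hg (by linarith : a - 1 < a) ha0 ha1
        (tendsto_poly_gauss_atBot _)
      have hzlT : zl ∈ T := (memroots (n+1) zl).2 (keyroot zl hzl0)
      -- count
      have hsub : (T' \ s) ∪ {zl, zr} ⊆ T := by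
        intro z hz
        rcases Finset.mem_union.1 hz with h | h
        · exact Finset.filter_subset _ _ (Finset.mem_sdiff.1 h).1
        · rcases Finset.mem_insert.1 h with rfl | h
          · exact hzlT
          · rw [Finset.mem_singleton.1 h]; exact hzrT
      have hdisj : Disjoint (T' \ s) ({zl, zr} : Finset ℝ) := by
        rw [Finset.disjoint_left]
        intro z hz
        obtain ⟨hzT', _⟩ := Finset.mem_sdiff.1 hz
        obtain ⟨-, hza, hzb⟩ := Finset.mem_filter.1 hzT'
        intro hmem
        rcases Finset.mem_insert.1 hmem with rfl | hmem
        · linarith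
        · rw [Finset.mem_singleton.1 hmem] at hzb; linarith
      have hpair : ({zl, zr} : Finset ℝ).card = 2 := Finset.card_pair (by intro h; rw [h] at hzl; linarith)
      have hfinal : (T' \ s).card + 2 ≤ T.card := by
        calc (T' \ s).card + 2 = ((T' \ s) ∪ {zl, zr}).card := by
              rw [Finset.card_union_of_disjoint hdisj, hpair]
          _ ≤ T.card := Finset.card_le_card hsub
      have := ih
      omega

/-- The probabilist's Hermite polynomial `He_n` has exactly `n` distinct real roots
(it is a degree-`n` polynomial all of whose roots are real and simple). -/
theorem hermite_n_distinct_real_roots (n : ℕ) :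
    {x : ℝ | Polynomial.aeval x (Polynomial.hermite n) = 0}.ncard = n := by
  have hset : {x : ℝ | Polynomial.aeval x (Polynomial.hermite n) = 0}
      = ((hermiteR n).roots.toFinset : Set ℝ) := by
    ext x
    simp only [Set.mem_setOf_eq, Finset.coe_sort_coe, Finset.mem_coe,
      Multiset.mem_toFinset, mem_roots (hermiteR_ne_zero n), IsRoot,
      aeval_eq_eval_hermiteR]
  rw [hset, Set.ncard_coe_finset]
  refine le_antisymm ?_ (card_roots_hermiteR_ge n)
  calc (hermiteR n).roots.toFinset.card ≤ Multiset.card (hermiteR n).roots :=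
        Multiset.toFinset_card_le _
    _ ≤ (hermiteR n).natDegree := (hermiteR n).card_roots'
    _ = n := hermiteR_natDegree n
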